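/- Let 𝔣 : ℝ → ℝ be C¹, 𝔪 > 0, and let φ : ℝ × [0,1] → ℝ be a bounded C² solution of ∂x2x2 φ = 𝔣(φ) in the strip ℝ × (0,1) with φ(x1, 0) = 0 and φ(x1, 1) = 𝔪 for all x1, satisfying 0 < φ < 𝔪 in the interior. Then φ is independent of x1: there exists a strictly increasing function φ̄ : [0,1] → ℝ such that φ(x1, x2) = φ̄(x2) for all (x1, x2). -/

import Mathlib

open Set Filter Topology

namespace Stmt2Aux

variable {𝔣 : ℝ → ℝ} {𝔪 : ℝ} {u v : ℝ → ℝ}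

/-- A slice solution of the ODE `u'' = 𝔣 u` on `[0,1]` pinched between `0` and `𝔪`. -/
structure Slice (𝔣 : ℝ → ℝ) (𝔪 : ℝ) (u : ℝ → ℝ) : Prop where
  reg : ContDiffOn ℝ 2 u (Icc 0 1)
  ode : ∀ t ∈ Ioo (0:ℝ) 1, deriv (deriv u) t = 𝔣 (u t)
  b0 : u 0 = 0
  b1 : u 1 = 𝔪
  pinch : ∀ t ∈ Ioo (0:ℝ) 1, 0 < u t ∧ u t < 𝔪

/-- The (one-sided) derivative of a slice. -/
noncomputable def sg (u : ℝ → ℝ) : ℝ → ℝ := derivWithin u (Icc 0 1)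

theorem Slice.cont (S : Slice 𝔣 𝔪 u) : ContinuousOn u (Icc 0 1) :=
  S.reg.continuousOn

theorem Slice.hderivWithin (S : Slice 𝔣 𝔪 u) :
    ∀ t ∈ Icc (0:ℝ) 1, HasDerivWithinAt u (sg u t) (Icc 0 1) t :=
  fun t ht => (S.reg.differentiableOn two_ne_zero t ht).hasDerivWithinAt

theorem Slice.gcont (S : Slice 𝔣 𝔪 u) : ContinuousOn (sg u) (Icc 0 1) :=
  S.reg.continuousOn_derivWithin (uniqueDiffOn_Icc zero_lt_one) one_le_two

theorem Slice.hderiv (S : Slice 𝔣 𝔪 u) :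
    ∀ t ∈ Ioo (0:ℝ) 1, HasDerivAt u (sg u t) t := by
  intro t ht
  have hmem : Icc (0:ℝ) 1 ∈ 𝓝 t := Icc_mem_nhds ht.1 ht.2
  have hd : DifferentiableAt ℝ u t :=
    (S.reg.differentiableOn two_ne_zero t (Ioo_subset_Icc_self ht)).differentiableAt hmem
  have : sg u t = deriv u t := derivWithin_of_mem_nhds hmem
  rw [this]
  exact hd.hasDerivAt

theorem Slice.gderiv (S : Slice 𝔣 𝔪 u) :
    ∀ t ∈ Ioo (0:ℝ) 1, HasDerivAt (sg u) (𝔣 (u t)) t := by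
  intro t ht
  have hreg : ContDiffOn ℝ 2 u (Ioo 0 1) := S.reg.mono Ioo_subset_Icc_self
  have hd1 : ContDiffOn ℝ 1 (deriv u) (Ioo 0 1) := by
    have := hreg.deriv_of_isOpen isOpen_Ioo (m := 1) (by norm_num)
    exact this
  have hdd : DifferentiableAt ℝ (deriv u) t :=
    (hd1.differentiableOn one_ne_zero t ht).differentiableAt (isOpen_Ioo.mem_nhds ht)
  have h1 : HasDerivAt (deriv u) (𝔣 (u t)) t := by
    have := hdd.hasDerivAt
    rwa [S.ode t ht] at this
  have heq : sg u =ᶠ[𝓝 t] deriv u := by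
    filter_upwards [isOpen_Ioo.mem_nhds ht] with s hs
    exact derivWithin_of_mem_nhds (Icc_mem_nhds hs.1 hs.2)
  exact h1.congr_of_eventuallyEq heq

theorem Slice.mem_Icc (h𝔪 : 0 < 𝔪) (S : Slice 𝔣 𝔪 u) :
    ∀ t ∈ Icc (0:ℝ) 1, u t ∈ Icc 0 𝔪 := by
  intro t ht
  rcases eq_or_lt_of_le ht.1 with h0 | h0
  · simp [← h0, S.b0, le_of_lt h𝔪]
  rcases eq_or_lt_of_le ht.2 with h1 | h1
  · simp [h1, S.b1, le_of_lt h𝔪]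
  exact ⟨(S.pinch t ⟨h0, h1⟩).1.le, (S.pinch t ⟨h0, h1⟩).2.le⟩

/-- Energy conservation for a slice. -/
theorem Slice.energy (hf : ContDiff ℝ 1 𝔣) (S : Slice 𝔣 𝔪 u) :
    ∀ t ∈ Icc (0:ℝ) 1,
      sg u t ^ 2 = sg u 0 ^ 2 + 2 * (∫ s in (0:ℝ)..(u t), 𝔣 s) := by
  set F : ℝ → ℝ := fun x => ∫ s in (0:ℝ)..x, 𝔣 s with hFdef
  have hF' : ∀ x, HasDerivAt F (𝔣 x) x := fun x =>
    (hf.continuous.integral_hasStrictDerivAt 0 x).hasDerivAt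
  have hFc : Continuous F := by
    rw [continuous_iff_continuousAt]; exact fun x => (hF' x).continuousAt
  set E : ℝ → ℝ := fun t => sg u t ^ 2 - 2 * F (u t) with hEdef
  have hEcont : ContinuousOn E (Icc 0 1) :=
    (S.gcont.pow 2).sub (continuousOn_const.mul (hFc.comp_continuousOn S.cont))
  have hEderiv : ∀ t ∈ Ioo (0:ℝ) 1, HasDerivAt E 0 t := by
    intro t ht
    have h1 := S.gderiv t ht
    have h2 := S.hderiv t ht
    have h3 : HasDerivAt (fun s => F (u s)) (𝔣 (u t) * sg u t) t := (hF' (u t)).comp t h2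
    have h4 : HasDerivAt (fun s => sg u s ^ 2 - 2 * F (u s)) _ t := (h1.pow 2).sub (h3.const_mul 2)
    convert h4 using 1
    push_cast
    ring
  have key : ∀ x ∈ Icc (0:ℝ) 1, E x = E 0 := by
    apply constant_of_has_deriv_right_zero hEcont
    intro x hx
    rcases eq_or_lt_of_le hx.1 with h0 | h0
    · rw [← h0]
      apply hasDerivWithinAt_Ici_of_tendsto_deriv (s := Ioo 0 1)
        (fun t ht => ((hEderiv t ht).differentiableAt).differentiableWithinAt)
        ((hEcont 0 ⟨le_rfl, zero_le_one⟩).mono Ioo_subset_Icc_self)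
        (Ioo_mem_nhdsGT_of_mem ⟨le_rfl, zero_lt_one⟩)
      apply tendsto_const_nhds.congr'
      filter_upwards [Ioo_mem_nhdsGT_of_mem (show (0:ℝ) ∈ Ico (0:ℝ) 1 from ⟨le_rfl, zero_lt_one⟩)]
        with t ht
      exact ((hEderiv t ht).deriv).symm
    · exact (hEderiv x ⟨h0, hx.2⟩).hasDerivWithinAt
  intro t ht
  have hkey := key t ht
  simp only [hEdef] at hkey
  have hF0 : F (u 0) = 0 := by
    rw [S.b0]; simp only [hFdef]; exact intervalIntegral.integral_same
  rw [hF0] at hkey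
  have : F (u t) = ∫ s in (0:ℝ)..(u t), 𝔣 s := rfl
  linarith

/-- The vector field of the first-order system is Lipschitz on `Icc 0 𝔪 ×ˢ univ`. -/
theorem exists_lip (hf : ContDiff ℝ 1 𝔣) (h𝔪 : 0 < 𝔪) :
    ∃ K : NNReal, LipschitzOnWith K (fun p : ℝ × ℝ => ((p.2, 𝔣 p.1) : ℝ × ℝ))
      (Icc 0 𝔪 ×ˢ (univ : Set ℝ)) := by
  obtain ⟨C, hC⟩ := (isCompact_Icc (a := (0:ℝ)) (b := 𝔪)).exists_bound_of_continuousOn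
    ((hf.continuous_deriv le_rfl).continuousOn)
  have hC0 : 0 ≤ C := le_trans (norm_nonneg _) (hC 0 ⟨le_rfl, h𝔪.le⟩)
  have hlip : ∀ x ∈ Icc (0:ℝ) 𝔪, ∀ y ∈ Icc (0:ℝ) 𝔪, ‖𝔣 x - 𝔣 y‖ ≤ C * ‖x - y‖ := by
    intro x hx y hy
    exact (convex_Icc (0:ℝ) 𝔪).norm_image_sub_le_of_norm_deriv_le
      (fun z _ => (hf.differentiable one_ne_zero).differentiableAt)
      (fun z hz => hC z hz) hy hx
  refine ⟨⟨max 1 C, le_trans zero_le_one (le_max_left _ _)⟩, ?_⟩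
  apply LipschitzOnWith.of_dist_le_mul
  intro p hp q hq
  rw [Prod.dist_eq]
  rw [Prod.dist_eq]
  simp only [NNReal.coe_mk]
  have h1 : dist p.2 q.2 ≤ max 1 C * dist p q := by
    calc dist p.2 q.2 ≤ dist p q := le_max_right _ _
    _ ≤ max 1 C * dist p q := by
        nlinarith [dist_nonneg (x := p) (y := q), le_max_left 1 C]
  have h2 : dist (𝔣 p.1) (𝔣 q.1) ≤ max 1 C * dist p q := by
    have := hlip p.1 hp.1 q.1 hq.1
    rw [Real.dist_eq]
    calc |𝔣 p.1 - 𝔣 q.1| ≤ C * |p.1 - q.1| := this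
    _ ≤ C * dist p q := by
        have : |p.1 - q.1| ≤ dist p q := by
          rw [← Real.dist_eq]; exact le_max_left _ _
        nlinarith
    _ ≤ max 1 C * dist p q := by nlinarith [dist_nonneg (x := p) (y := q), le_max_right 1 C]
  exact max_le h1 h2

/-- No interior critical point. -/
theorem Slice.sg_ne_zero (hf : ContDiff ℝ 1 𝔣) (h𝔪 : 0 < 𝔪) (S : Slice 𝔣 𝔪 u)
    {t0 : ℝ} (ht0 : t0 ∈ Ioo (0:ℝ) 1) : sg u t0 ≠ 0 := by
  intro hg
  obtain ⟨K, hK⟩ := exists_lip hf h𝔪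
  set a : ℝ := max 0 (2 * t0 - 1) with ha
  set b : ℝ := min 1 (2 * t0) with hb
  have hab : a + b = 2 * t0 := by
    rcases le_total (2 * t0) 1 with h | h
    · rw [ha, hb, max_eq_left (by linarith), min_eq_right h]; ring
    · rw [ha, hb, max_eq_right (by linarith), min_eq_left h]; ring
  have ha0 : 0 ≤ a := le_max_left _ _
  have hb1 : b ≤ 1 := min_le_left _ _
  have hat0 : a < t0 := by
    rw [ha]; exact max_lt ht0.1 (by linarith [ht0.2])
  have ht0b : t0 < b := by
    rw [hb]; exact lt_min ht0.2 (by linarith [ht0.1])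
  have hsub : Ioo a b ⊆ Ioo (0:ℝ) 1 :=
    fun t ht => ⟨lt_of_le_of_lt ha0 ht.1, lt_of_lt_of_le ht.2 hb1⟩
  have hsubI : Icc a b ⊆ Icc (0:ℝ) 1 :=
    fun t ht => ⟨le_trans ha0 ht.1, le_trans ht.2 hb1⟩
  have hrefl : ∀ t ∈ Ioo a b, (2 * t0 - t) ∈ Ioo a b :=
    fun t ht => ⟨by linarith [ht.2], by linarith [ht.1]⟩
  have hreflI : MapsTo (fun t : ℝ => 2 * t0 - t) (Icc a b) (Icc a b) := by
    intro t ht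
    simp only [mem_Icc] at ht ⊢
    constructor <;> linarith [ht.1, ht.2]
  set y1 : ℝ → ℝ × ℝ := fun t => (u t, sg u t) with hy1
  set y2 : ℝ → ℝ × ℝ := fun t => (u (2 * t0 - t), -sg u (2 * t0 - t)) with hy2
  have hcont1 : ContinuousOn y1 (Icc a b) := (S.cont.mono hsubI).prodMk (S.gcont.mono hsubI)
  have hcont2 : ContinuousOn y2 (Icc a b) := by
    have hc : ContinuousOn (fun t : ℝ => 2 * t0 - t) (Icc a b) :=
      (continuous_const.sub continuous_id).continuousOn
    exact ((S.cont.mono hsubI).comp hc hreflI).prodMk ((S.gcont.mono hsubI).comp hc hreflI).neg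
  have hd1 : ∀ t ∈ Ioo a b, HasDerivAt y1 ((y1 t).2, 𝔣 ((y1 t).1)) t := fun t ht =>
    (S.hderiv t (hsub ht)).prodMk (S.gderiv t (hsub ht))
  have hd2 : ∀ t ∈ Ioo a b, HasDerivAt y2 ((y2 t).2, 𝔣 ((y2 t).1)) t := by
    intro t ht
    have hs := hsub (hrefl t ht)
    have hinner : HasDerivAt (fun t : ℝ => 2 * t0 - t) (-1) t := by
      simpa using (hasDerivAt_id t).const_sub (2 * t0)
    have hc1 : HasDerivAt (fun t => u (2 * t0 - t)) (sg u (2 * t0 - t) * (-1)) t :=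
      (S.hderiv _ hs).comp t hinner
    have hc2 : HasDerivAt (fun t => -sg u (2 * t0 - t)) (-(𝔣 (u (2 * t0 - t)) * (-1))) t :=
      ((S.gderiv _ hs).comp t hinner).neg
    have hcp := hc1.prodMk hc2
    convert hcp using 2 <;> simp [hy2]
  have hm1 : ∀ t ∈ Ioo a b, y1 t ∈ Icc (0:ℝ) 𝔪 ×ˢ (univ : Set ℝ) := fun t ht =>
    ⟨S.mem_Icc h𝔪 t (Ioo_subset_Icc_self (hsub ht)), trivial⟩
  have hm2 : ∀ t ∈ Ioo a b, y2 t ∈ Icc (0:ℝ) 𝔪 ×ˢ (univ : Set ℝ) := fun t ht =>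
    ⟨S.mem_Icc h𝔪 _ (Ioo_subset_Icc_self (hsub (hrefl t ht))), trivial⟩
  have heqt0 : y1 t0 = y2 t0 := by
    simp only [hy1, hy2, show 2 * t0 - t0 = t0 by ring, hg, neg_zero]
  have hEq : EqOn y1 y2 (Icc a b) :=
    ODE_solution_unique_of_mem_Icc (fun _ _ => hK) ⟨hat0, ht0b⟩ hcont1 hd1 hm1
      hcont2 hd2 hm2 heqt0
  have hub : u b = u a := by
    have h1 := hEq (right_mem_Icc.2 (le_of_lt (lt_trans hat0 ht0b)))
    have h2 := congrArg Prod.fst h1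
    simpa [hy1, hy2, show 2 * t0 - b = a by linarith] using h2
  rcases le_or_gt (2 * t0) 1 with h | h
  · have haa : a = 0 := by rw [ha]; exact max_eq_left (by linarith)
    have hbb : b = 2 * t0 := by rw [hb]; exact min_eq_right h
    have hub' : u (2 * t0) = 0 := by rw [← hbb, hub, haa, S.b0]
    rcases eq_or_lt_of_le h with h1 | h1
    · rw [h1, S.b1] at hub'
      exact absurd hub' (ne_of_gt h𝔪)
    · have hp := (S.pinch (2 * t0) ⟨by linarith [ht0.1], h1⟩).1
      rw [hub'] at hp
      exact lt_irrefl 0 hp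
  · have haa : a = 2 * t0 - 1 := by rw [ha]; exact max_eq_right (by linarith)
    have hbb : b = 1 := by rw [hb]; exact min_eq_left (by linarith)
    have hub' : u (2 * t0 - 1) = 𝔪 := by rw [← haa, ← hub, hbb, S.b1]
    have hp := (S.pinch (2 * t0 - 1) ⟨by linarith, by linarith [ht0.2]⟩).2
    rw [hub'] at hp
    exact lt_irrefl 𝔪 hp

theorem Slice.sg_pos (hf : ContDiff ℝ 1 𝔣) (h𝔪 : 0 < 𝔪) (S : Slice 𝔣 𝔪 u) :
    ∀ t ∈ Ioo (0:ℝ) 1, 0 < sg u t := by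
  obtain ⟨c, hc, hceq⟩ := exists_hasDerivAt_eq_slope u (sg u) zero_lt_one
    S.cont S.hderiv
  have hcpos : 0 < sg u c := by
    rw [hceq, S.b0, S.b1]; simpa using h𝔪
  intro t ht
  rcases lt_trichotomy (sg u t) 0 with hneg | hzero | hpos
  · exfalso
    rcases le_total t c with hle | hle
    · obtain ⟨z, hz, hz0⟩ := intermediate_value_Icc hle
        (S.gcont.mono (fun x hx => ⟨le_trans ht.1.le hx.1, le_trans hx.2 hc.2.le⟩))
        (show (0:ℝ) ∈ Icc (sg u t) (sg u c) from ⟨hneg.le, hcpos.le⟩)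
      exact S.sg_ne_zero hf h𝔪 ⟨lt_of_lt_of_le ht.1 hz.1, lt_of_le_of_lt hz.2 hc.2⟩ hz0
    · obtain ⟨z, hz, hz0⟩ := intermediate_value_Icc' hle
        (S.gcont.mono (fun x hx => ⟨le_trans hc.1.le hx.1, le_trans hx.2 ht.2.le⟩))
        (show (0:ℝ) ∈ Icc (sg u t) (sg u c) from ⟨hneg.le, hcpos.le⟩)
      exact S.sg_ne_zero hf h𝔪 ⟨lt_of_lt_of_le hc.1 hz.1, lt_of_le_of_lt hz.2 ht.2⟩ hz0
  · exact absurd hzero (S.sg_ne_zero hf h𝔪 ht)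
  · exact hpos

theorem Slice.sg_nonneg (hf : ContDiff ℝ 1 𝔣) (h𝔪 : 0 < 𝔪) (S : Slice 𝔣 𝔪 u) :
    ∀ t ∈ Icc (0:ℝ) 1, 0 ≤ sg u t := by
  intro t ht
  rcases eq_or_lt_of_le ht.1 with h0 | h0
  · -- t = 0 : limit from the right
    rw [← h0]
    have h1 : Tendsto (sg u) (𝓝[Ioo (0:ℝ) 1] 0) (𝓝 (sg u 0)) :=
      ((S.gcont 0 ⟨le_rfl, zero_le_one⟩).mono Ioo_subset_Icc_self)
    have hne : (𝓝[Ioo (0:ℝ) 1] (0:ℝ)).NeBot := by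
      rw [nhdsWithin_Ioo_eq_nhdsGT zero_lt_one]
      infer_instance
    exact ge_of_tendsto h1 (eventually_of_mem self_mem_nhdsWithin
      (fun s hs => (S.sg_pos hf h𝔪 s hs).le))
  rcases eq_or_lt_of_le ht.2 with h1 | h1
  · -- t = 1 : limit from the left
    rw [h1]
    have h2 : Tendsto (sg u) (𝓝[Ioo (0:ℝ) 1] 1) (𝓝 (sg u 1)) :=
      ((S.gcont 1 ⟨zero_le_one, le_rfl⟩).mono Ioo_subset_Icc_self)
    have hne : (𝓝[Ioo (0:ℝ) 1] (1:ℝ)).NeBot := by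
      rw [nhdsWithin_Ioo_eq_nhdsLT zero_lt_one]
      infer_instance
    exact ge_of_tendsto h2 (eventually_of_mem self_mem_nhdsWithin
      (fun s hs => (S.sg_pos hf h𝔪 s hs).le))
  · exact (S.sg_pos hf h𝔪 t ⟨h0, h1⟩).le

theorem Slice.strictMono (hf : ContDiff ℝ 1 𝔣) (h𝔪 : 0 < 𝔪) (S : Slice 𝔣 𝔪 u) :
    StrictMonoOn u (Icc 0 1) := by
  apply strictMonoOn_of_deriv_pos (convex_Icc (0:ℝ) 1) S.cont
  intro x hx
  rw [interior_Icc] at hx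
  rw [(S.hderiv x hx).deriv]
  exact S.sg_pos hf h𝔪 x hx

/-- Comparison: two slices cannot have different initial derivatives. -/
theorem Slice.not_lt' (hf : ContDiff ℝ 1 𝔣) (h𝔪 : 0 < 𝔪) (Su : Slice 𝔣 𝔪 u)
    (Sv : Slice 𝔣 𝔪 v) : ¬ sg v 0 < sg u 0 := by
  intro hlt
  set w : ℝ → ℝ := fun t => u t - v t with hw
  have hw0 : w 0 = 0 := by simp [hw, Su.b0, Sv.b0]
  have hw1 : w 1 = 0 := by simp [hw, Su.b1, Sv.b1]
  have hwcont : ContinuousOn w (Icc 0 1) := Su.cont.sub Sv.cont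
  have hwd : ∀ t ∈ Icc (0:ℝ) 1, HasDerivWithinAt w (sg u t - sg v t) (Icc 0 1) t :=
    fun t ht => (Su.hderivWithin t ht).sub (Sv.hderivWithin t ht)
  have h0m : (0:ℝ) ∈ Icc (0:ℝ) 1 := ⟨le_rfl, zero_le_one⟩
  -- step 1: find tp ∈ Ioo 0 1 with 0 < w tp
  have hslope0 : Tendsto (slope w 0) (𝓝[Icc (0:ℝ) 1 \ {0}] 0) (𝓝 (sg u 0 - sg v 0)) :=
    hasDerivWithinAt_iff_tendsto_slope.1 (hwd 0 h0m)
  have hne0 : (𝓝[Icc (0:ℝ) 1 \ {0}] (0:ℝ)).NeBot := by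
    apply mem_closure_iff_nhdsWithin_neBot.mp
    have hsub : Ioo (0:ℝ) 1 ⊆ Icc (0:ℝ) 1 \ {0} :=
      fun x hx => ⟨Ioo_subset_Icc_self hx, ne_of_gt hx.1⟩
    apply closure_mono hsub
    rw [closure_Ioo (zero_ne_one)]
    exact h0m
  have hev1 : ∀ᶠ t in 𝓝[Icc (0:ℝ) 1 \ {0}] 0, 0 < slope w 0 t :=
    hslope0.eventually (lt_mem_nhds (by linarith))
  have hev2 : ∀ᶠ t in 𝓝[Icc (0:ℝ) 1 \ {0}] 0, t < 1 :=
    eventually_nhdsWithin_of_eventually_nhds (gt_mem_nhds zero_lt_one)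
  obtain ⟨tp, ⟨htps, htp_lt⟩, htpIcc, htpne⟩ :=
    ((hev1.and hev2).and eventually_mem_nhdsWithin).exists
  have htp_ne : tp ≠ 0 := by simpa using htpne
  have htp_pos : 0 < tp := lt_of_le_of_ne htpIcc.1 (Ne.symm htp_ne)
  have hwtp : 0 < w tp := by
    rw [slope_def_field, hw0, sub_zero, sub_zero] at htps
    rcases div_pos_iff.mp htps with ⟨h1, _⟩ | ⟨_, h2⟩
    · exact h1
    · linarith
  -- step 2: the first zero of w after tp
  set Z : Set ℝ := Icc tp 1 ∩ w ⁻¹' {0} with hZ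
  have hZclosed : IsClosed Z :=
    (hwcont.mono (Icc_subset_Icc htp_pos.le le_rfl)).preimage_isClosed_of_isClosed
      isClosed_Icc isClosed_singleton
  have hZne : (1:ℝ) ∈ Z := ⟨⟨htp_lt.le, le_rfl⟩, by simp [hw1]⟩
  have hZbdd : BddBelow Z := BddBelow.mono inter_subset_left bddBelow_Icc
  set t1 : ℝ := sInf Z with ht1def
  have ht1Z : t1 ∈ Z := hZclosed.csInf_mem ⟨1, hZne⟩ hZbdd
  have ht1low : ∀ z ∈ Z, t1 ≤ z := fun z hz => csInf_le hZbdd hz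
  have hwt1 : w t1 = 0 := ht1Z.2
  have htp_t1 : tp < t1 := by
    rcases eq_or_lt_of_le ht1Z.1.1 with h | h
    · exfalso; rw [h, hwt1] at hwtp; exact lt_irrefl 0 hwtp
    · exact h
  have ht1_1 : t1 ≤ 1 := ht1Z.1.2
  have ht1_0 : 0 < t1 := lt_trans htp_pos htp_t1
  have ht1m : t1 ∈ Icc (0:ℝ) 1 := ⟨ht1_0.le, ht1_1⟩
  -- step 3: w > 0 on [tp, t1)
  have hwpos : ∀ t ∈ Ico tp t1, 0 < w t := by
    intro t ht
    by_contra hle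
    push_neg at hle
    obtain ⟨z, hz, hz0⟩ := intermediate_value_Icc' ht.1
      (hwcont.mono (Icc_subset_Icc htp_pos.le (by linarith [ht.2, ht1_1])))
      (show (0:ℝ) ∈ Icc (w t) (w tp) from ⟨hle, hwtp.le⟩)
    have hzZ : z ∈ Z := ⟨⟨hz.1, by linarith [hz.2, ht.2, ht1_1]⟩, hz0⟩
    have := ht1low z hzZ
    linarith [hz.2, ht.2]
  -- step 4: energy comparison at t1
  have hu_eq : u t1 = v t1 := by
    have h := hwt1; simp only [hw] at h; linarith
  have hEu := Su.energy hf t1 ht1m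
  have hEv := Sv.energy hf t1 ht1m
  rw [hu_eq] at hEu
  have hgut1 := Su.sg_nonneg hf h𝔪 t1 ht1m
  have hgvt1 := Sv.sg_nonneg hf h𝔪 t1 ht1m
  have hgv0 := Sv.sg_nonneg hf h𝔪 0 h0m
  have hkey : 0 < sg u t1 - sg v t1 := by
    nlinarith [hEu, hEv, hgut1, hgvt1, hgv0, hlt]
  -- step 5: contradiction with the left slope at t1
  have hslope1 : Tendsto (slope w t1) (𝓝[Icc (0:ℝ) 1 \ {t1}] t1) (𝓝 (sg u t1 - sg v t1)) :=
    hasDerivWithinAt_iff_tendsto_slope.1 (hwd t1 ht1m)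
  have hsub2 : Ico tp t1 ⊆ Icc (0:ℝ) 1 \ {t1} :=
    fun x hx => ⟨⟨le_trans htp_pos.le hx.1, le_trans hx.2.le ht1_1⟩, ne_of_lt hx.2⟩
  have hslope2 : Tendsto (slope w t1) (𝓝[Ico tp t1] t1) (𝓝 (sg u t1 - sg v t1)) :=
    hslope1.mono_left (nhdsWithin_mono _ hsub2)
  have hne2 : (𝓝[Ico tp t1] t1).NeBot := by
    apply mem_closure_iff_nhdsWithin_neBot.mp
    rw [closure_Ico (ne_of_lt htp_t1)]
    exact ⟨htp_t1.le, le_rfl⟩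
  have hfinal : sg u t1 - sg v t1 ≤ 0 := by
    apply le_of_tendsto hslope2
    apply eventually_of_mem self_mem_nhdsWithin
    intro t ht
    rw [slope_def_field, hwt1]
    apply div_nonpos_of_nonneg_of_nonpos
    · linarith [hwpos t ht]
    · linarith [ht.2]
  linarith

theorem Slice.init_u (S : Slice 𝔣 𝔪 u) : HasDerivWithinAt u (sg u 0) (Ici 0) 0 := by
  apply hasDerivWithinAt_Ici_of_tendsto_deriv (s := Ioo 0 1)
    (fun t ht => ((S.hderiv t ht).differentiableAt).differentiableWithinAt)
    ((S.cont 0 ⟨le_rfl, zero_le_one⟩).mono Ioo_subset_Icc_self)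
    (Ioo_mem_nhdsGT_of_mem ⟨le_rfl, zero_lt_one⟩)
  have hg : Tendsto (sg u) (𝓝[>] 0) (𝓝 (sg u 0)) := by
    rw [← nhdsWithin_Ioc_eq_nhdsGT zero_lt_one]
    exact (S.gcont 0 ⟨le_rfl, zero_le_one⟩).mono_left (nhdsWithin_mono _ Ioc_subset_Icc_self)
  apply hg.congr'
  filter_upwards [Ioo_mem_nhdsGT_of_mem (show (0:ℝ) ∈ Ico (0:ℝ) 1 from ⟨le_rfl, zero_lt_one⟩)]
    with t ht
  exact ((S.hderiv t ht).deriv).symm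

theorem Slice.init_g (hf : ContDiff ℝ 1 𝔣) (S : Slice 𝔣 𝔪 u) :
    HasDerivWithinAt (sg u) (𝔣 (u 0)) (Ici 0) 0 := by
  apply hasDerivWithinAt_Ici_of_tendsto_deriv (s := Ioo 0 1)
    (fun t ht => ((S.gderiv t ht).differentiableAt).differentiableWithinAt)
    ((S.gcont 0 ⟨le_rfl, zero_le_one⟩).mono Ioo_subset_Icc_self)
    (Ioo_mem_nhdsGT_of_mem ⟨le_rfl, zero_lt_one⟩)
  have hu : Tendsto u (𝓝[>] 0) (𝓝 (u 0)) := by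
    rw [← nhdsWithin_Ioc_eq_nhdsGT zero_lt_one]
    exact (S.cont 0 ⟨le_rfl, zero_le_one⟩).mono_left (nhdsWithin_mono _ Ioc_subset_Icc_self)
  have hcomp : Tendsto (fun t => 𝔣 (u t)) (𝓝[>] (0:ℝ)) (𝓝 (𝔣 (u 0))) :=
    (hf.continuous.continuousAt.tendsto).comp hu
  apply hcomp.congr'
  filter_upwards [Ioo_mem_nhdsGT_of_mem (show (0:ℝ) ∈ Ico (0:ℝ) 1 from ⟨le_rfl, zero_lt_one⟩)]
    with t ht
  exact ((S.gderiv t ht).deriv).symm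

/-- Uniqueness of slice solutions. -/
theorem Slice.eqOn (hf : ContDiff ℝ 1 𝔣) (h𝔪 : 0 < 𝔪) (Su : Slice 𝔣 𝔪 u)
    (Sv : Slice 𝔣 𝔪 v) : EqOn u v (Icc 0 1) := by
  have h0 : sg u 0 = sg v 0 :=
    le_antisymm (not_lt.1 (Slice.not_lt' hf h𝔪 Su Sv)) (not_lt.1 (Slice.not_lt' hf h𝔪 Sv Su))
  obtain ⟨K, hK⟩ := exists_lip hf h𝔪
  set y1 : ℝ → ℝ × ℝ := fun t => (u t, sg u t) with hy1
  set y2 : ℝ → ℝ × ℝ := fun t => (v t, sg v t) with hy2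
  have hder : ∀ (z : ℝ → ℝ) (Sz : Slice 𝔣 𝔪 z), ∀ t ∈ Ico (0:ℝ) 1,
      HasDerivWithinAt (fun s => (z s, sg z s)) ((sg z t, 𝔣 (z t)) : ℝ × ℝ) (Ici t) t := by
    intro z Sz t ht
    rcases eq_or_lt_of_le ht.1 with h | h
    · rw [← h]
      exact (Sz.init_u).prodMk (Sz.init_g hf)
    · exact ((Sz.hderiv t ⟨h, ht.2⟩).prodMk (Sz.gderiv t ⟨h, ht.2⟩)).hasDerivWithinAt
  have hEq : EqOn y1 y2 (Icc 0 1) := by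
    apply ODE_solution_unique_of_mem_Icc_right
      (v := fun _ p => ((p.2, 𝔣 p.1) : ℝ × ℝ)) (s := fun _ => Icc 0 𝔪 ×ˢ (univ : Set ℝ))
      (fun _ _ => hK) (Su.cont.prodMk Su.gcont) (hder u Su)
      (fun t ht => ⟨Su.mem_Icc h𝔪 t (Ico_subset_Icc_self ht), trivial⟩)
      (Sv.cont.prodMk Sv.gcont) (hder v Sv)
      (fun t ht => ⟨Sv.mem_Icc h𝔪 t (Ico_subset_Icc_self ht), trivial⟩)
    simp only [hy1, hy2, Su.b0, Sv.b0, h0]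
  intro t ht
  have := congrArg Prod.fst (hEq ht)
  simpa [hy1, hy2] using this

end Stmt2Aux


open Set

/-- Liouville-type theorem for the degenerate equation `∂_{x2 x2} φ = 𝔣(φ)` in the strip
`ℝ × [0,1]`: a bounded `C²` solution pinched between its boundary values `0` and `𝔪 > 0`
depends only on `x2`, and the resulting profile is strictly increasing. -/
theorem stmt_2 (𝔣 : ℝ → ℝ) (hf : ContDiff ℝ 1 𝔣) (𝔪 : ℝ) (h𝔪 : 0 < 𝔪)
    (φ : ℝ × ℝ → ℝ)
    (hreg : ContDiffOn ℝ 2 φ (Set.univ ×ˢ Set.Icc (0:ℝ) 1))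
    (hbdd : ∃ M : ℝ, ∀ x ∈ Set.univ ×ˢ Set.Icc (0:ℝ) 1, |φ x| ≤ M)
    (heq : ∀ x1 : ℝ, ∀ x2 ∈ Set.Ioo (0:ℝ) 1,
      deriv (deriv (fun t => φ (x1, t))) x2 = 𝔣 (φ (x1, x2)))
    (hb0 : ∀ x1 : ℝ, φ (x1, 0) = 0)
    (hb1 : ∀ x1 : ℝ, φ (x1, 1) = 𝔪)
    (hpinch : ∀ x1 : ℝ, ∀ x2 ∈ Set.Ioo (0:ℝ) 1, 0 < φ (x1, x2) ∧ φ (x1, x2) < 𝔪) :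
    ∃ φbar : ℝ → ℝ, StrictMonoOn φbar (Set.Icc 0 1)
      ∧ ∀ x1 : ℝ, ∀ x2 ∈ Set.Icc (0:ℝ) 1, φ (x1, x2) = φbar x2 := by
  have hslice : ∀ x1 : ℝ, Stmt2Aux.Slice 𝔣 𝔪 (fun t => φ (x1, t)) := by
    intro x1
    refine ⟨?_, heq x1, hb0 x1, hb1 x1, hpinch x1⟩
    have hmap : MapsTo (fun t : ℝ => (x1, t)) (Icc 0 1) (univ ×ˢ Icc (0:ℝ) 1) :=
      fun t ht => ⟨trivial, ht⟩
    exact hreg.comp ((contDiff_const.prodMk contDiff_id).contDiffOn) hmap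
  refine ⟨fun t => φ (0, t), (hslice 0).strictMono hf h𝔪, ?_⟩
  intro x1 x2 hx2
  exact Stmt2Aux.Slice.eqOn hf h𝔪 (hslice x1) (hslice 0) hx2
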